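/- Let (B_t)_{t≥0} be a standard Brownian motion and define the Brownian bridge β_t = B_t − t·B_1 for t ∈ [0,1]. For every η ∈ (0,2) there exists a constant c(η) > 0 such that for every ε with 0 < ε ≤ 1/e, P( sup_{ε ≤ t ≤ 1−ε} β_t/√(t(1−t)) ≥ √((2−η) log log(1/ε)) ) ≥ c(η). -/

import Mathlib

open MeasureTheory Filter ProbabilityTheory
open scoped ENNReal NNReal

/-- A standard Brownian motion: `B 0 = 0` a.s., a.s. continuous paths on `[0,∞)`,
independent increments, and Gaussian increments `B t - B s ~ N(0, t - s)` for `0 ≤ s ≤ t`. -/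
structure IsStandardBM {Ω : Type*} [MeasurableSpace Ω] (P : Measure Ω)
    (B : ℝ → Ω → ℝ) : Prop where
  meas : ∀ t, Measurable (B t)
  start : ∀ᵐ ω ∂P, B 0 ω = 0
  cont : ∀ᵐ ω ∂P, ContinuousOn (fun t => B t ω) (Set.Ici 0)
  indep : ∀ (n : ℕ) (t : ℕ → ℝ), (∀ i, 0 ≤ t i) → Monotone t →
    iIndepFun
      (fun i : Fin n => fun ω => B (t (i.1 + 1)) ω - B (t i.1) ω) P
  incr : ∀ s t : ℝ, 0 ≤ s → s ≤ t →
    Measure.map (fun ω => B t ω - B s ω) P = gaussianReal 0 ((t - s).toNNReal)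

set_option maxHeartbeats 1000000

open Real Set
set_option maxHeartbeats 1000000

lemma gauss_scale_Ici {v : ℝ} (hv : 0 < v) (lam : ℝ) :
    gaussianReal 0 v.toNNReal (Ici (lam * Real.sqrt v)) = gaussianReal 0 1 (Ici lam) := by
  have hs : (0:ℝ) < Real.sqrt v := Real.sqrt_pos.2 hv
  have hmap := gaussianReal_map_const_mul (μ := 0) (v := 1) (Real.sqrt v)
  have hvv : (NNReal.mk (Real.sqrt v ^ 2) (sq_nonneg _) : ℝ≥0) * 1 = v.toNNReal := by
    ext
    simp [Real.sq_sqrt hv.le, hv.le]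
  rw [hvv, mul_zero] at hmap
  rw [← hmap, Measure.map_apply (by fun_prop) measurableSet_Ici]
  congr 1
  ext x
  simp only [mem_preimage, mem_Ici]
  constructor
  · intro h
    nlinarith
  · intro h
    calc lam * Real.sqrt v ≤ x * Real.sqrt v := by nlinarith
      _ = Real.sqrt v * x := mul_comm _ _

lemma gauss_scale_Iic {v : ℝ} (hv : 0 < v) (lam : ℝ) :
    gaussianReal 0 v.toNNReal (Iic (-(lam * Real.sqrt v))) = gaussianReal 0 1 (Ici lam) := by
  have hs : (0:ℝ) < Real.sqrt v := Real.sqrt_pos.2 hv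
  have hmap := gaussianReal_map_const_mul (μ := 0) (v := 1) (-Real.sqrt v)
  have hvv : (NNReal.mk ((-Real.sqrt v) ^ 2) (sq_nonneg _) : ℝ≥0) * 1 = v.toNNReal := by
    ext
    simp [Real.sq_sqrt hv.le, hv.le]
  rw [hvv, mul_zero] at hmap
  rw [← hmap, Measure.map_apply (by fun_prop) measurableSet_Iic]
  congr 1
  ext x
  simp only [mem_preimage, mem_Iic, mem_Ici]
  constructor
  · intro h
    nlinarith
  · intro h
    nlinarith

lemma gauss_pdf_one (x : ℝ) :
    gaussianPDF 0 1 x = ENNReal.ofReal (Real.exp (-x^2/2) / Real.sqrt (2*Real.pi)) := by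
  rw [gaussianPDF, gaussianPDFReal]
  norm_num [div_eq_inv_mul]

lemma gauss_tail_lb {a : ℝ} (ha : 0 ≤ a) :
    ENNReal.ofReal (Real.exp (-(a+1)^2/2) / Real.sqrt (2*Real.pi)) ≤ gaussianReal 0 1 (Ici a) := by
  rw [gaussianReal_apply 0 one_ne_zero]
  calc ENNReal.ofReal (Real.exp (-(a+1)^2/2) / Real.sqrt (2*Real.pi))
      = ∫⁻ _ in Icc a (a+1), ENNReal.ofReal (Real.exp (-(a+1)^2/2) / Real.sqrt (2*Real.pi)) := by
        rw [setLIntegral_const, Real.volume_Icc]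
        norm_num
    _ ≤ ∫⁻ x in Icc a (a+1), gaussianPDF 0 1 x := by
        refine setLIntegral_mono (measurable_gaussianPDF 0 1) fun x hx => ?_
        rw [gauss_pdf_one]
        refine ENNReal.ofReal_le_ofReal ?_
        have hπ : (0:ℝ) < Real.sqrt (2*Real.pi) := Real.sqrt_pos.2 (by positivity)
        apply div_le_div_of_nonneg_right ?_ hπ.le
        apply Real.exp_le_exp.2
        have h1 : x ≤ a + 1 := hx.2
        have h2 : a ≤ x := hx.1
        nlinarith
    _ ≤ ∫⁻ x in Ici a, gaussianPDF 0 1 x := lintegral_mono_set (Icc_subset_Ici_self)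

lemma gauss_mid_lb' :
    ENNReal.ofReal (Real.exp (-1/2) / Real.sqrt (2*Real.pi)) ≤ gaussianReal 0 1 {y | |y| ≤ 1} := by
  rw [gaussianReal_apply 0 one_ne_zero]
  calc ENNReal.ofReal (Real.exp (-1/2) / Real.sqrt (2*Real.pi))
      = ∫⁻ _ in Icc (0:ℝ) 1, ENNReal.ofReal (Real.exp (-1/2) / Real.sqrt (2*Real.pi)) := by
        rw [setLIntegral_const, Real.volume_Icc]
        norm_num
    _ ≤ ∫⁻ x in Icc (0:ℝ) 1, gaussianPDF 0 1 x := by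
        refine setLIntegral_mono (measurable_gaussianPDF 0 1) fun x hx => ?_
        rw [gauss_pdf_one]
        refine ENNReal.ofReal_le_ofReal ?_
        have hπ : (0:ℝ) < Real.sqrt (2*Real.pi) := Real.sqrt_pos.2 (by positivity)
        apply div_le_div_of_nonneg_right ?_ hπ.le
        apply Real.exp_le_exp.2
        have h1 : x ≤ 1 := hx.2
        have h2 : 0 ≤ x := hx.1
        nlinarith
    _ ≤ ∫⁻ x in {y : ℝ | |y| ≤ 1}, gaussianPDF 0 1 x := by
        refine lintegral_mono_set fun x hx => ?_
        simp only [mem_setOf_eq, abs_le]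
        exact ⟨by linarith [hx.1], hx.2⟩

lemma gauss_pdf_one' (x : ℝ) :
    gaussianPDF 0 1 x = ENNReal.ofReal (Real.exp (-x^2/2) / Real.sqrt (2*Real.pi)) := by
  rw [gaussianPDF, gaussianPDFReal]
  norm_num [div_eq_inv_mul]

lemma gauss_tail_ub {a : ℝ} (ha : 2 ≤ a) :
    gaussianReal 0 1 (Ici a) ≤ ENNReal.ofReal (Real.exp (-a^2/2)) := by
  have ha0 : (0:ℝ) < a := by linarith
  have hb : (0:ℝ) < a/2 := by linarith
  rw [gaussianReal_apply 0 one_ne_zero]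
  have hπ : (1:ℝ) ≤ Real.sqrt (2*Real.pi) := by
    rw [show (1:ℝ) = Real.sqrt 1 by simp]
    exact Real.sqrt_le_sqrt (by nlinarith [Real.pi_gt_three])
  calc ∫⁻ x in Ici a, gaussianPDF 0 1 x
      ≤ ∫⁻ x in Ici a, ENNReal.ofReal (Real.exp (-(a/2)*x)) := by
        refine setLIntegral_mono (by fun_prop) fun x hx => ?_
        rw [gauss_pdf_one']
        refine ENNReal.ofReal_le_ofReal ?_
        have h2 : a ≤ x := hx
        calc Real.exp (-x^2/2) / Real.sqrt (2*Real.pi) ≤ Real.exp (-x^2/2) / 1 := by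
              apply div_le_div_of_nonneg_left (Real.exp_pos _).le (by linarith) hπ
          _ = Real.exp (-x^2/2) := by ring
          _ ≤ Real.exp (-(a/2)*x) := by
              apply Real.exp_le_exp.2
              nlinarith [sq_nonneg (x - a)]
    _ = ∫⁻ x in Ioi a, ENNReal.ofReal (Real.exp (-(a/2)*x)) :=
        (setLIntegral_congr (Ioi_ae_eq_Ici (a := a))).symm
    _ = ENNReal.ofReal (∫ x in Ioi a, Real.exp (-(a/2)*x)) :=
        (ofReal_integral_eq_lintegral_ofReal (exp_neg_integrableOn_Ioi a hb)
          (Filter.Eventually.of_forall fun x => (Real.exp_pos _).le)).symm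
    _ ≤ ENNReal.ofReal (Real.exp (-a^2/2)) := by
        refine ENNReal.ofReal_le_ofReal ?_
        have := integral_comp_mul_left_Ioi (fun x => Real.exp (-x)) a hb
        simp only [smul_eq_mul, ← neg_mul] at this
        rw [this, integral_exp_neg_Ioi]
        have h1 : ((a/2):ℝ)⁻¹ = 2/a := by rw [inv_div]
        have h3 : -(a/2*a) = -a^2/2 := by ring
        rw [h1, h3]
        have h2 : 2/a ≤ 1 := by
          rw [div_le_one ha0]; linarith
        nlinarith [Real.exp_pos (-a^2/2)]

lemma gauss_mid_v {v : ℝ} (hv0 : 0 < v) (hv1 : v ≤ 1) :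
    gaussianReal 0 1 {y : ℝ | |y| ≤ 1} ≤ gaussianReal 0 v.toNNReal {y : ℝ | |y| ≤ 1} := by
  have hs : (0:ℝ) < Real.sqrt v := Real.sqrt_pos.2 hv0
  have hs1 : Real.sqrt v ≤ 1 := by
    rw [show (1:ℝ) = Real.sqrt 1 by simp]
    exact Real.sqrt_le_sqrt hv1
  have hmap := gaussianReal_map_const_mul (μ := 0) (v := 1) (Real.sqrt v)
  have hvv : (NNReal.mk (Real.sqrt v ^ 2) (sq_nonneg _) : ℝ≥0) * 1 = v.toNNReal := by
    ext
    simp [Real.sq_sqrt hv0.le, hv0.le]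
  rw [hvv, mul_zero] at hmap
  have hmeas : MeasurableSet {y : ℝ | |y| ≤ 1} :=
    (isClosed_le (continuous_abs) continuous_const).measurableSet
  rw [← hmap, Measure.map_apply (by fun_prop) hmeas]
  refine measure_mono fun x hx => ?_
  simp only [mem_setOf_eq, mem_preimage] at *
  rw [abs_mul, abs_of_pos hs]
  nlinarith [abs_nonneg x]


lemma exp_neg_one_lt_half : Real.exp (-1) < 1/2 := by
  rw [Real.exp_neg]
  rw [inv_lt_comm₀ (Real.exp_pos 1) (by norm_num)]
  calc (1/2 : ℝ)⁻¹ = 2 := by norm_num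
    _ < Real.exp 1 := by
      have := Real.exp_one_gt_d9
      linarith

lemma key_reduction {Ω : Type*} [MeasurableSpace Ω]
    (P : Measure Ω) [IsProbabilityMeasure P]
    (B : ℝ → Ω → ℝ) (hB : IsStandardBM P B)
    (ε a c : ℝ) (hε0 : 0 < ε) (hε1 : ε ≤ Real.exp (-1)) (ha : 0 ≤ a)
    (E : Set Ω)
    (hE : ∀ ω ∈ E, B 0 ω = 0 →
      ∃ τ ∈ Set.Icc ε (1-ε), a * Real.sqrt (τ*(1-τ)) ≤ B τ ω - τ * B 1 ω)
    (hc : ENNReal.ofReal c ≤ P E) :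
    ENNReal.ofReal c ≤
      P {ω | a ≤ ⨆ t : Set.Icc ε (1 - ε),
          (B t.1 ω - t.1 * B 1 ω) / Real.sqrt (t.1 * (1 - t.1))} := by
  have hhalf : ε < 1/2 := lt_of_le_of_lt hε1 _root_.exp_neg_one_lt_half
  set S : Set Ω := {ω | ContinuousOn (fun t => B t ω) (Set.Ici 0) ∧ B 0 ω = 0} with hSdef
  have hS : P Sᶜ = 0 := by
    have h := hB.cont.and hB.start
    rw [Filter.eventually_iff, mem_ae_iff] at h
    exact h
  refine le_trans (le_trans hc ?_) (measure_mono ?_ : P (E ∩ S) ≤ _)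
  · rw [measure_inter_conull hS]
  · rintro ω ⟨hωE, hωcont, hω0⟩
    obtain ⟨τ, hτ, hineq⟩ := hE ω hωE hω0
    simp only [Set.mem_setOf_eq]
    have hττ : 0 < τ * (1-τ) := by
      have h1 : 0 < τ := lt_of_lt_of_le hε0 hτ.1
      have h2 : τ < 1 := lt_of_le_of_lt hτ.2 (by linarith)
      nlinarith
    set g : ℝ → ℝ := fun t => (B t ω - t * B 1 ω) / Real.sqrt (t * (1-t)) with hgdef
    have hga : a ≤ g τ := by
      rw [hgdef]
      rw [le_div_iff₀ (Real.sqrt_pos.2 hττ)]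
      linarith [hineq]
    have hgcont : ContinuousOn g (Set.Icc ε (1-ε)) := by
      apply ContinuousOn.div
      · exact ((hωcont.mono (fun x hx => le_trans hε0.le hx.1)).sub
          ((continuous_id.mul continuous_const).continuousOn))
      · exact (Real.continuous_sqrt.comp (continuous_id.mul (continuous_const.sub continuous_id))).continuousOn
      · intro t ht
        have h1 : 0 < t := lt_of_lt_of_le hε0 ht.1
        have h2 : t < 1 := lt_of_le_of_lt ht.2 (by linarith)
        exact (Real.sqrt_pos.2 (by nlinarith)).ne'
    have hbdd : BddAbove (Set.range fun t : Set.Icc ε (1-ε) => g t.1) := by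
      have himg := (isCompact_Icc (a := ε) (b := 1-ε)).bddAbove_image hgcont
      rw [← Set.range_restrict] at himg
      exact himg
    calc a ≤ g τ := hga
      _ ≤ ⨆ t : Set.Icc ε (1-ε), g t.1 := le_ciSup hbdd ⟨τ, hτ⟩

lemma exp_neg_one_lt_37 : Real.exp (-1) ≤ 0.37 := by
  rw [Real.exp_neg]
  rw [inv_le_comm₀ (Real.exp_pos 1) (by norm_num)]
  calc (0.37:ℝ)⁻¹ ≤ 2.71 := by norm_num
    _ ≤ Real.exp 1 := by linarith [Real.exp_one_gt_d9]

lemma onepoint {Ω : Type*} [MeasurableSpace Ω]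
    (P : Measure Ω) [IsProbabilityMeasure P]
    (B : ℝ → Ω → ℝ) (hB : IsStandardBM P B)
    (ε a M : ℝ) (hε0 : 0 < ε) (hε1 : ε ≤ Real.exp (-1)) (ha : 0 ≤ a)
    (haM : a ≤ M) (haε : ε * a ≤ 1/2) :
    ENNReal.ofReal ((Real.exp (-(M+3)^2/2) / Real.sqrt (2*Real.pi)) *
        (Real.exp (-1/2) / Real.sqrt (2*Real.pi))) ≤
      P {ω | a ≤ ⨆ t : Set.Icc ε (1 - ε),
          (B t.1 ω - t.1 * B 1 ω) / Real.sqrt (t.1 * (1 - t.1))} := by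
  have hε37 : ε ≤ 0.37 := hε1.trans exp_neg_one_lt_37
  set X : Ω → ℝ := fun ω => B ε ω - B 0 ω with hX
  set Y : Ω → ℝ := fun ω => B 1 ω - B ε ω with hY
  set A : Set Ω := X ⁻¹' (Ici ((a+2) * Real.sqrt ε)) with hA
  set F : Set Ω := Y ⁻¹' {y : ℝ | |y| ≤ 1} with hF
  have hXm : Measurable X := (hB.meas ε).sub (hB.meas 0)
  have hYm : Measurable Y := (hB.meas 1).sub (hB.meas ε)
  have hmidm : MeasurableSet {y : ℝ | |y| ≤ 1} :=
    (isClosed_le (continuous_abs) continuous_const).measurableSet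
  -- laws
  have hlawX : P A = gaussianReal 0 ε.toNNReal (Ici ((a+2) * Real.sqrt ε)) := by
    rw [hA, ← Measure.map_apply hXm measurableSet_Ici, hB.incr 0 ε le_rfl hε0.le, sub_zero]
  have hlawY : P F = gaussianReal 0 (1-ε).toNNReal {y : ℝ | |y| ≤ 1} := by
    rw [hF, ← Measure.map_apply hYm hmidm, hB.incr ε 1 hε0.le (by linarith)]
  -- independence
  have hindep : IndepFun X Y P := by
    have hmono : Monotone (fun j : ℕ => if j = 0 then (0:ℝ) else if j = 1 then ε else 1) := by
      apply monotone_nat_of_le_succ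
      intro n
      match n with
      | 0 => simpa using hε0.le
      | 1 => simpa using by linarith
      | (n+2) => simp
    have h2 := hB.indep 2 (fun j => if j = 0 then (0:ℝ) else if j = 1 then ε else 1)
      (fun i => by split_ifs <;> linarith) hmono
    have h01 := h2.indepFun (i := (0 : Fin 2)) (j := (1 : Fin 2)) (by decide)
    convert h01 using 1 <;> norm_num [hX, hY]
  have hPA : ENNReal.ofReal (Real.exp (-(M+3)^2/2) / Real.sqrt (2*Real.pi)) ≤ P A := by
    rw [hlawX, gauss_scale_Ici hε0 (a+2)]
    refine le_trans ?_ (gauss_tail_lb (by linarith))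
    apply ENNReal.ofReal_le_ofReal
    apply div_le_div_of_nonneg_right ?_ (Real.sqrt_pos.2 (by positivity)).le
    apply Real.exp_le_exp.2
    nlinarith
  have hPF : ENNReal.ofReal (Real.exp (-1/2) / Real.sqrt (2*Real.pi)) ≤ P F := by
    rw [hlawY]
    exact le_trans gauss_mid_lb' (gauss_mid_v (by linarith) (by linarith))
  have hPE : ENNReal.ofReal ((Real.exp (-(M+3)^2/2) / Real.sqrt (2*Real.pi)) *
      (Real.exp (-1/2) / Real.sqrt (2*Real.pi))) ≤ P (A ∩ F) := by
    rw [hindep.meas_inter ⟨_, measurableSet_Ici, rfl⟩ ⟨_, hmidm, rfl⟩]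
    rw [ENNReal.ofReal_mul (by positivity)]
    exact mul_le_mul' hPA hPF
  refine key_reduction P B hB ε a _ hε0 hε1 ha (A ∩ F) ?_ hPE
  rintro ω ⟨hωA, hωF⟩ hω0
  refine ⟨ε, ⟨le_rfl, by linarith⟩, ?_⟩
  replace hωA : (a+2) * Real.sqrt ε ≤ B ε ω := by
    have h' : (a+2) * Real.sqrt ε ≤ B ε ω - B 0 ω := hωA
    rw [hω0, sub_zero] at h'
    exact h'
  replace hωF : |B 1 ω - B ε ω| ≤ 1 := hωF
  set s := Real.sqrt ε with hs
  set u := Real.sqrt (1-ε) with hu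
  have hs2 : s^2 = ε := Real.sq_sqrt hε0.le
  have hu2 : u^2 = 1-ε := Real.sq_sqrt (by linarith)
  have hs0 : 0 < s := Real.sqrt_pos.2 hε0
  have hu0 : 0 ≤ u := Real.sqrt_nonneg _
  have hu1 : u ≤ 1 := by nlinarith
  have hs61 : s ≤ 0.61 := by nlinarith
  have hsqm : Real.sqrt (ε * (1-ε)) = s * u := Real.sqrt_mul hε0.le _
  rw [hsqm]
  have key : (1-ε) * ((a+2) * s) - ε ≤ B ε ω - ε * B 1 ω := by
    have h1 : B ε ω - ε * B 1 ω = (1-ε) * B ε ω - ε * (B 1 ω - B ε ω) := by ring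
    rw [h1]
    have h2 : ε * (B 1 ω - B ε ω) ≤ ε := by
      have := (abs_le.1 hωF).2
      nlinarith
    have h3 : (1-ε) * ((a+2) * s) ≤ (1-ε) * B ε ω := by
      apply mul_le_mul_of_nonneg_left hωA (by linarith)
    linarith
  refine le_trans ?_ key
  -- a * (s*u) ≤ (1-ε)(a+2)s - ε
  have haux : a * (1 - u) ≤ 1/2 := by nlinarith
  nlinarith [mul_nonneg ha hu0, mul_nonneg ha hs0.le, sq_nonneg (s-u), mul_nonneg (mul_nonneg ha hs0.le) hu0]

lemma numeric_exp2 : Real.exp (-2:ℝ) ≤ 0.14 := by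
  have h := exp_neg_one_lt_37
  calc Real.exp (-2:ℝ) = Real.exp (-1) * Real.exp (-1) := by
        rw [← Real.exp_add]; norm_num
    _ ≤ 0.37 * 0.37 := by nlinarith [Real.exp_pos (-1:ℝ)]
    _ ≤ 0.14 := by norm_num

lemma numeric_exp4 : Real.exp (-4:ℝ) ≤ 0.02 := by
  have h := numeric_exp2
  calc Real.exp (-4:ℝ) = Real.exp (-2) * Real.exp (-2) := by
        rw [← Real.exp_add]; norm_num
    _ ≤ 0.14 * 0.14 := by nlinarith [Real.exp_pos (-2:ℝ)]
    _ ≤ 0.02 := by norm_num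

lemma multiscale {Ω : Type*} [MeasurableSpace Ω]
    (P : Measure Ω) [IsProbabilityMeasure P]
    (B : ℝ → Ω → ℝ) (hB : IsStandardBM P B)
    (ε a lam : ℝ) (m K : ℕ)
    (hε0 : 0 < ε) (hε1 : ε ≤ Real.exp (-1)) (ha : 0 ≤ a)
    (hm : 3 ≤ m) (hK : 1 ≤ K)
    (hKm : (K:ℝ) * m ≤ Real.log (1/ε))
    (hlam : lam = (a+3) / Real.sqrt (1 - Real.exp (-(m:ℝ))))
    (hp1 : 1 ≤ (gaussianReal 0 1 (Ici lam)).toReal * K)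
    (hp2 : (gaussianReal 0 1 (Ici lam)).toReal * K ≤ 2) :
    ENNReal.ofReal (1/4) ≤
      P {ω | a ≤ ⨆ t : Set.Icc ε (1 - ε),
          (B t.1 ω - t.1 * B 1 ω) / Real.sqrt (t.1 * (1 - t.1))} := by
  have he37 : Real.exp (-1:ℝ) ≤ 0.37 := exp_neg_one_lt_37
  set p : ℝ := (gaussianReal 0 1 (Ici lam)).toReal with hp
  have hp0 : 0 ≤ p := ENNReal.toReal_nonneg
  have hple1 : p ≤ 1 := by
    rw [hp]
    calc (gaussianReal 0 1 (Ici lam)).toReal ≤ (1 : ℝ≥0∞).toReal :=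
        ENNReal.toReal_mono (by simp) (prob_le_one)
      _ = 1 := by simp
  -- exp(-m) facts
  have hq1 : Real.exp (-(m:ℝ)) ≤ Real.exp (-3:ℝ) := by
    apply Real.exp_le_exp.2
    simp only [neg_le_neg_iff]
    exact_mod_cast hm
  have he3 : Real.exp (-3:ℝ) ≤ 0.06 := by
    calc Real.exp (-3:ℝ) = Real.exp (-2) * Real.exp (-1) := by
          rw [← Real.exp_add]; norm_num
      _ ≤ 0.14 * 0.37 := by nlinarith [Real.exp_pos (-2:ℝ), Real.exp_pos (-1:ℝ), numeric_exp2]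
      _ ≤ 0.06 := by norm_num
  have hqlt1 : Real.exp (-(m:ℝ)) < 1 := by
    apply Real.exp_lt_one_iff.2
    simp only [neg_neg, Left.neg_neg_iff]
    positivity
  have hsq1q : 0 < Real.sqrt (1 - Real.exp (-(m:ℝ))) := Real.sqrt_pos.2 (by linarith)
  have hlam0 : 0 ≤ lam := by
    rw [hlam]; positivity
  -- the time grid
  set t : ℕ → ℝ := fun j => Real.exp (-(((K+1-j : ℕ) : ℝ) * m)) with htdef
  have ht0 : ∀ j, 0 ≤ t j := fun j => (Real.exp_pos _).le
  have htmono : Monotone t := by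
    intro j j' hj
    apply Real.exp_le_exp.2
    have : ((K+1-j' : ℕ) : ℝ) ≤ ((K+1-j : ℕ) : ℝ) := by
      exact_mod_cast Nat.sub_le_sub_left hj _
    nlinarith [Nat.cast_nonneg (K+1-j') (α := ℝ), Nat.cast_nonneg m (α := ℝ)]
  have hstep : ∀ i : Fin K, t i.1 = t (i.1+1) * Real.exp (-(m:ℝ)) := by
    intro i
    simp only [htdef]
    rw [← Real.exp_add]
    congr 1
    have h1 : (K+1-i.1 : ℕ) = (K - i.1) + 1 := by omega
    have h2 : (K+1-(i.1+1) : ℕ) = K - i.1 := by omega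
    rw [h1, h2]
    push_cast
    ring
  have htpos : ∀ j, 0 < t j := fun j => Real.exp_pos _
  have htsub : ∀ i : Fin K, t (i.1+1) - t i.1 = t (i.1+1) * (1 - Real.exp (-(m:ℝ))) := by
    intro i; rw [hstep i]; ring
  have htsubpos : ∀ i : Fin K, 0 < t (i.1+1) - t i.1 := by
    intro i; rw [htsub i]
    exact mul_pos (htpos _) (by linarith)
  have htle : ∀ i : Fin K, t (i.1+1) ≤ Real.exp (-(m:ℝ)) := by
    intro i
    simp only [htdef]
    apply Real.exp_le_exp.2
    have h1 : (1:ℝ) ≤ ((K+1-(i.1+1) : ℕ) : ℝ) := by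
      have : 1 ≤ K+1-(i.1+1) := by omega
      exact_mod_cast this
    nlinarith [Nat.cast_nonneg m (α := ℝ), show (0:ℝ) < m by exact_mod_cast (by omega : 0 < m)]
  have htge : ∀ i : Fin K, ε ≤ t (i.1+1) := by
    intro i
    have hεeq : ε = Real.exp (-Real.log (1/ε)) := by
      rw [one_div, Real.log_inv, neg_neg, Real.exp_log hε0]
    rw [hεeq]
    simp only [htdef]
    apply Real.exp_le_exp.2
    have h1 : ((K+1-(i.1+1) : ℕ) : ℝ) ≤ K := by
      have : K+1-(i.1+1) ≤ K := by omega
      exact_mod_cast this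
    have h2 : ((K+1-(i.1+1) : ℕ) : ℝ) * m ≤ K * m := by
      nlinarith [Nat.cast_nonneg m (α := ℝ)]
    linarith
  -- events
  set Δ : Fin K → Ω → ℝ := fun i ω => B (t (i.1+1)) ω - B (t i.1) ω with hΔdef
  set Xl : Fin K → Ω → ℝ := fun i ω => B (t i.1) ω - B 0 ω with hXldef
  set c : Fin K → ℝ := fun i => lam * Real.sqrt (t (i.1+1) - t i.1) with hcdef
  set A : Fin K → Set Ω := fun i => Δ i ⁻¹' (Ici (c i)) with hAdef
  set s : Fin K → Set Ω := fun i => Δ i ⁻¹' (Iio (c i)) with hsdef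
  set C : Fin K → Set Ω := fun i => Xl i ⁻¹' {y : ℝ | |y| ≤ Real.sqrt (t (i.1+1))} with hCdef
  set D : Set Ω := (fun ω => B 1 ω - B 0 ω) ⁻¹' {y : ℝ | |y| ≤ 2} with hDdef
  set E : Set Ω := (⋃ i, A i ∩ C i) ∩ D with hEdef
  have hΔm : ∀ i, Measurable (Δ i) := fun i => (hB.meas _).sub (hB.meas _)
  have hXlm : ∀ i, Measurable (Xl i) := fun i => (hB.meas _).sub (hB.meas _)
  have habs : MeasurableSet {y : ℝ | |y| ≤ (2:ℝ)} :=
    (isClosed_le (continuous_abs) continuous_const).measurableSet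
  have habs' : ∀ i : Fin K, MeasurableSet {y : ℝ | |y| ≤ Real.sqrt (t (i.1+1))} :=
    fun i => (isClosed_le (continuous_abs) continuous_const).measurableSet
  -- laws
  have hlawA : ∀ i, P (A i) = ENNReal.ofReal p := by
    intro i
    rw [hAdef]
    rw [← Measure.map_apply (hΔm i) measurableSet_Ici,
      hB.incr (t i.1) (t (i.1+1)) (ht0 _) (htmono (by omega))]
    rw [show c i = lam * Real.sqrt (t (i.1+1) - t i.1) from rfl] at *
    rw [gauss_scale_Ici (htsubpos i) lam]
    exact (ENNReal.ofReal_toReal (measure_ne_top _ _)).symm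
  have hlaws : ∀ i, P (s i) = ENNReal.ofReal (1 - p) := by
    intro i
    rw [hsdef]
    rw [← Measure.map_apply (hΔm i) measurableSet_Iio,
      hB.incr (t i.1) (t (i.1+1)) (ht0 _) (htmono (by omega))]
    rw [← Set.compl_Ici, prob_compl_eq_one_sub measurableSet_Ici]
    rw [show c i = lam * Real.sqrt (t (i.1+1) - t i.1) from rfl]
    rw [gauss_scale_Ici (htsubpos i) lam]
    rw [← ENNReal.ofReal_toReal (measure_ne_top (gaussianReal 0 1) (Ici lam)), ← hp]
    rw [← ENNReal.ofReal_one, ← ENNReal.ofReal_sub _ hp0]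
  -- product formula
  have hprod : P (⋂ i, s i) = ENNReal.ofReal ((1-p)^K) := by
    have hind := hB.indep K t ht0 htmono
    have := hind.meas_iInter (s := s) (fun i => ⟨Iio (c i), measurableSet_Iio, rfl⟩)
    rw [this]
    have : ∀ i : Fin K, P (s i) = ENNReal.ofReal (1-p) := hlaws
    rw [Finset.prod_congr rfl (fun i _ => this i)]
    rw [Finset.prod_const]
    rw [← ENNReal.ofReal_pow (by linarith)]
    simp
  -- the union lower bound
  have hUnion : ENNReal.ofReal 0.63 ≤ P ((⋂ i, s i)ᶜ) := by
    rw [prob_compl_eq_one_sub (MeasurableSet.iInter (fun i => (hΔm i) measurableSet_Iio))]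
    rw [hprod]
    have hreal : (1-p)^K ≤ Real.exp (-1) := by
      calc (1-p)^K ≤ (Real.exp (-p))^K := by
            apply pow_le_pow_left₀ (by linarith) ?_ K
            linarith [Real.add_one_le_exp (-p)]
        _ = Real.exp (-(p * K)) := by
            rw [← Real.exp_nat_mul]; ring_nf
        _ ≤ Real.exp (-1) := by
            apply Real.exp_le_exp.2; linarith
    calc ENNReal.ofReal 0.63 ≤ 1 - ENNReal.ofReal (Real.exp (-1)) := by
          rw [← ENNReal.ofReal_one, ← ENNReal.ofReal_sub _ (Real.exp_pos _).le]
          exact ENNReal.ofReal_le_ofReal (by linarith)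
      _ ≤ 1 - ENNReal.ofReal ((1-p)^K) := by
          exact tsub_le_tsub_left (ENNReal.ofReal_le_ofReal hreal) 1
  -- pairwise independence bound
  have hq2 : Real.exp (-(Real.exp (m:ℝ))/2) ≤ 0.02 := by
    have h20 : (20:ℝ) ≤ Real.exp (m:ℝ) := by
      have h3 : Real.exp (3:ℝ) ≤ Real.exp (m:ℝ) := by
        apply Real.exp_le_exp.2; exact_mod_cast hm
      have : (20:ℝ) ≤ Real.exp 3 := by
        rw [show (3:ℝ) = 1+1+1 by norm_num, Real.exp_add, Real.exp_add]
        nlinarith [Real.exp_one_gt_d9]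
      linarith
    calc Real.exp (-(Real.exp (m:ℝ))/2) ≤ Real.exp (-4:ℝ) := by
          apply Real.exp_le_exp.2; linarith
      _ ≤ 0.02 := numeric_exp4
  have hsqrt_exp : Real.sqrt (Real.exp (m:ℝ)) = Real.exp ((m:ℝ)/2) := by
    rw [show Real.exp (m:ℝ) = (Real.exp ((m:ℝ)/2))^2 by rw [sq, ← Real.exp_add]; ring_nf]
    exact Real.sqrt_sq (Real.exp_pos _).le
  have hem2 : (2:ℝ) ≤ Real.exp ((m:ℝ)/2) := by
    have : Real.exp (1:ℝ) ≤ Real.exp ((m:ℝ)/2) := by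
      apply Real.exp_le_exp.2
      have : (3:ℝ) ≤ m := by exact_mod_cast hm
      linarith
    nlinarith [Real.exp_one_gt_d9]
  have hCtail : ∀ i : Fin K, P ((C i)ᶜ) ≤ ENNReal.ofReal (2 * Real.exp (-(Real.exp (m:ℝ))/2)) := by
    intro i
    have hlawXl : Measure.map (Xl i) P = gaussianReal 0 (t i.1).toNNReal := by
      have h := hB.incr 0 (t i.1) le_rfl (ht0 _)
      rw [sub_zero] at h
      exact h
    have hτeq : t (i.1+1) = t i.1 * Real.exp (m:ℝ) := by
      rw [hstep i, mul_assoc, ← Real.exp_add]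
      simp
    have hsqτ : Real.sqrt (t (i.1+1)) = Real.exp ((m:ℝ)/2) * Real.sqrt (t i.1) := by
      rw [hτeq, Real.sqrt_mul (ht0 _), hsqrt_exp, mul_comm]
    have hsub : (C i)ᶜ ⊆ Xl i ⁻¹' (Ici (Real.exp ((m:ℝ)/2) * Real.sqrt (t i.1)))
        ∪ Xl i ⁻¹' (Iic (-(Real.exp ((m:ℝ)/2) * Real.sqrt (t i.1)))) := by
      intro ω hω
      simp only [hCdef, Set.mem_compl_iff, Set.mem_preimage, Set.mem_setOf_eq, not_le, hsqτ] at hω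
      rcases le_or_gt 0 (Xl i ω) with h | h
      · left
        rw [Set.mem_preimage, Set.mem_Ici]
        rw [abs_of_nonneg h] at hω
        linarith
      · right
        rw [Set.mem_preimage, Set.mem_Iic]
        rw [abs_of_neg h] at hω
        linarith
    calc P ((C i)ᶜ) ≤ P (Xl i ⁻¹' (Ici (Real.exp ((m:ℝ)/2) * Real.sqrt (t i.1)))) +
          P (Xl i ⁻¹' (Iic (-(Real.exp ((m:ℝ)/2) * Real.sqrt (t i.1))))) :=
        le_trans (measure_mono hsub) (measure_union_le _ _)
      _ ≤ ENNReal.ofReal (Real.exp (-(Real.exp (m:ℝ))/2)) +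
            ENNReal.ofReal (Real.exp (-(Real.exp (m:ℝ))/2)) := by
        have he2 : Real.exp ((m:ℝ)/2)^2/2 = Real.exp (m:ℝ)/2 := by
          rw [sq, ← Real.exp_add]; ring_nf
        have hIci : P (Xl i ⁻¹' (Ici (Real.exp ((m:ℝ)/2) * Real.sqrt (t i.1)))) ≤
            ENNReal.ofReal (Real.exp (-(Real.exp (m:ℝ))/2)) := by
          rw [← Measure.map_apply (hXlm i) measurableSet_Ici, hlawXl,
            gauss_scale_Ici (htpos i.1) _]
          refine le_trans (gauss_tail_ub hem2) (ENNReal.ofReal_le_ofReal ?_)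
          apply Real.exp_le_exp.2
          rw [neg_div, he2]
          linarith
        have hIic : P (Xl i ⁻¹' (Iic (-(Real.exp ((m:ℝ)/2) * Real.sqrt (t i.1))))) ≤
            ENNReal.ofReal (Real.exp (-(Real.exp (m:ℝ))/2)) := by
          rw [← Measure.map_apply (hXlm i) measurableSet_Iic, hlawXl,
            gauss_scale_Iic (htpos i.1) _]
          refine le_trans (gauss_tail_ub hem2) (ENNReal.ofReal_le_ofReal ?_)
          apply Real.exp_le_exp.2
          rw [neg_div, he2]
          linarith
        exact add_le_add hIci hIic
      _ = ENNReal.ofReal (2 * Real.exp (-(Real.exp (m:ℝ))/2)) := by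
        rw [← ENNReal.ofReal_add (Real.exp_pos _).le (Real.exp_pos _).le]
        ring_nf
  have hACbound : ∀ i : Fin K, P (A i ∩ (C i)ᶜ) ≤
      ENNReal.ofReal p * ENNReal.ofReal (2 * Real.exp (-(Real.exp (m:ℝ))/2)) := by
    intro i
    have hmono2 : Monotone (fun j : ℕ => if j = 0 then (0:ℝ) else if j = 1 then t i.1 else t (i.1+1)) := by
      apply monotone_nat_of_le_succ
      intro n
      match n with
      | 0 => exact ht0 _
      | 1 => exact htmono (by omega : i.1 ≤ i.1 + 1)
      | (n+2) => exact le_refl _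
    have h2 := hB.indep 2 (fun j : ℕ => if j = 0 then (0:ℝ) else if j = 1 then t i.1 else t (i.1+1))
      (fun j => by split_ifs <;> first | exact le_refl _ | exact ht0 _ | norm_num) hmono2
    have h01 : IndepFun (Xl i) (Δ i) P := by
      have h := h2.indepFun (i := (0 : Fin 2)) (j := (1 : Fin 2)) (by decide)
      convert h using 1 <;> norm_num [hXldef, hΔdef]
    have hmeq : P (A i ∩ (C i)ᶜ) = P ((C i)ᶜ) * P (A i) := by
      rw [Set.inter_comm]
      exact h01.meas_inter ⟨_, (habs' i).compl, rfl⟩ ⟨_, measurableSet_Ici, rfl⟩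
    rw [hmeq, hlawA i, mul_comm]
    exact mul_le_mul_right (hCtail i) _
  -- sum bound
  have hsum : ∑ i : Fin K, P (A i ∩ (C i)ᶜ) ≤ ENNReal.ofReal 0.08 := by
    calc ∑ i : Fin K, P (A i ∩ (C i)ᶜ)
        ≤ ∑ _i : Fin K, ENNReal.ofReal p * ENNReal.ofReal (2 * Real.exp (-(Real.exp (m:ℝ))/2)) :=
          Finset.sum_le_sum (fun i _ => hACbound i)
      _ = (K : ℝ≥0∞) * (ENNReal.ofReal p * ENNReal.ofReal (2 * Real.exp (-(Real.exp (m:ℝ))/2))) := by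
          rw [Finset.sum_const, Finset.card_univ, Fintype.card_fin, nsmul_eq_mul]
      _ = ENNReal.ofReal ((K:ℝ) * (p * (2 * Real.exp (-(Real.exp (m:ℝ))/2)))) := by
          rw [← ENNReal.ofReal_mul hp0, ← ENNReal.ofReal_natCast K,
            ← ENNReal.ofReal_mul (Nat.cast_nonneg K)]
      _ ≤ ENNReal.ofReal 0.08 := by
          apply ENNReal.ofReal_le_ofReal
          have h1 : (K:ℝ) * (p * (2 * Real.exp (-(Real.exp (m:ℝ))/2))) =
              (p * K) * (2 * Real.exp (-(Real.exp (m:ℝ))/2)) := by ring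
          rw [h1]
          nlinarith [Real.exp_pos (-(Real.exp (m:ℝ))/2), hq2, hp2, hp1]
  -- D bound
  have hDbound : P Dᶜ ≤ ENNReal.ofReal 0.28 := by
    have hBm : Measurable (fun ω => B 1 ω - B 0 ω) := (hB.meas 1).sub (hB.meas 0)
    have hlawD : Measure.map (fun ω => B 1 ω - B 0 ω) P = gaussianReal 0 (1:ℝ).toNNReal := by
      have h := hB.incr 0 1 le_rfl zero_le_one
      rw [sub_zero] at h
      exact h
    have hsub : Dᶜ ⊆ (fun ω => B 1 ω - B 0 ω) ⁻¹' (Ici (2 * Real.sqrt 1)) ∪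
        (fun ω => B 1 ω - B 0 ω) ⁻¹' (Iic (-(2 * Real.sqrt 1))) := by
      intro ω hω
      simp only [hDdef, Set.mem_compl_iff, Set.mem_preimage, Set.mem_setOf_eq, not_le] at hω
      rcases le_or_gt 0 (B 1 ω - B 0 ω) with h | h
      · refine Set.mem_union_left _ ?_
        rw [Set.mem_preimage, Set.mem_Ici, Real.sqrt_one]
        rw [abs_of_nonneg h] at hω
        linarith
      · refine Set.mem_union_right _ ?_
        rw [Set.mem_preimage, Set.mem_Iic, Real.sqrt_one]
        rw [abs_of_neg h] at hω
        linarith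
    have h2 : (2:ℝ) ≤ 2 := le_refl 2
    calc P Dᶜ ≤ P ((fun ω => B 1 ω - B 0 ω) ⁻¹' (Ici (2 * Real.sqrt 1))) +
          P ((fun ω => B 1 ω - B 0 ω) ⁻¹' (Iic (-(2 * Real.sqrt 1)))) :=
        le_trans (measure_mono hsub) (measure_union_le _ _)
      _ ≤ ENNReal.ofReal (Real.exp (-(2:ℝ)^2/2)) + ENNReal.ofReal (Real.exp (-(2:ℝ)^2/2)) := by
          have hIci : P ((fun ω => B 1 ω - B 0 ω) ⁻¹' (Ici (2 * Real.sqrt 1))) ≤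
              ENNReal.ofReal (Real.exp (-(2:ℝ)^2/2)) := by
            rw [← Measure.map_apply hBm measurableSet_Ici, hlawD, gauss_scale_Ici one_pos 2]
            exact gauss_tail_ub h2
          have hIic : P ((fun ω => B 1 ω - B 0 ω) ⁻¹' (Iic (-(2 * Real.sqrt 1)))) ≤
              ENNReal.ofReal (Real.exp (-(2:ℝ)^2/2)) := by
            rw [← Measure.map_apply hBm measurableSet_Iic, hlawD, gauss_scale_Iic one_pos 2]
            exact gauss_tail_ub h2
          exact add_le_add hIci hIic
      _ ≤ ENNReal.ofReal 0.28 := by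
          rw [← ENNReal.ofReal_add (Real.exp_pos _).le (Real.exp_pos _).le]
          apply ENNReal.ofReal_le_ofReal
          have : Real.exp (-(2:ℝ)^2/2) = Real.exp (-2:ℝ) := by norm_num
          rw [this]
          linarith [numeric_exp2]
  -- inclusion
  have hincl : (⋂ i, s i)ᶜ ⊆ E ∪ ((⋃ i, A i ∩ (C i)ᶜ) ∪ Dᶜ) := by
    intro ω hω
    rw [Set.mem_compl_iff, Set.mem_iInter] at hω
    push_neg at hω
    obtain ⟨i, hi⟩ := hω
    have hAi : ω ∈ A i := by
      simp only [hsdef, Set.mem_preimage, Set.mem_Iio, not_lt] at hi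
      exact hi
    by_cases hDω : ω ∈ D
    · by_cases hCω : ω ∈ C i
      · exact Or.inl ⟨Set.mem_iUnion.2 ⟨i, hAi, hCω⟩, hDω⟩
      · exact Or.inr (Or.inl (Set.mem_iUnion.2 ⟨i, hAi, hCω⟩))
    · exact Or.inr (Or.inr hDω)
  -- conclude P E ≥ 1/4
  have hPE : ENNReal.ofReal (1/4) ≤ P E := by
    have h1 : P ((⋂ i, s i)ᶜ) ≤ P E + ENNReal.ofReal 0.36 := by
      calc P ((⋂ i, s i)ᶜ) ≤ P (E ∪ ((⋃ i, A i ∩ (C i)ᶜ) ∪ Dᶜ)) := measure_mono hincl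
        _ ≤ P E + P ((⋃ i, A i ∩ (C i)ᶜ) ∪ Dᶜ) := measure_union_le _ _
        _ ≤ P E + (P (⋃ i, A i ∩ (C i)ᶜ) + P Dᶜ) :=
            add_le_add_right (measure_union_le _ _) _
        _ ≤ P E + (ENNReal.ofReal 0.08 + ENNReal.ofReal 0.28) := by
            refine add_le_add_right (add_le_add ?_ hDbound) _
            exact le_trans (measure_iUnion_fintype_le _ _) hsum
        _ = P E + ENNReal.ofReal 0.36 := by
            rw [← ENNReal.ofReal_add (by norm_num) (by norm_num)]
            norm_num
    have h2 : ENNReal.ofReal (1/4) + ENNReal.ofReal 0.36 ≤ P E + ENNReal.ofReal 0.36 := by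
      calc ENNReal.ofReal (1/4) + ENNReal.ofReal 0.36 = ENNReal.ofReal 0.61 := by
            rw [← ENNReal.ofReal_add (by norm_num) (by norm_num)]
            norm_num
        _ ≤ ENNReal.ofReal 0.63 := ENNReal.ofReal_le_ofReal (by norm_num)
        _ ≤ P ((⋂ i, s i)ᶜ) := hUnion
        _ ≤ P E + ENNReal.ofReal 0.36 := h1
    exact (ENNReal.add_le_add_iff_right (by simp)).1 h2
  -- apply the reduction
  refine key_reduction P B hB ε a (1/4) hε0 hε1 ha E ?_ hPE
  rintro ω ⟨hωU, hωD⟩ hω0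
  obtain ⟨i, hωA, hωC⟩ := Set.mem_iUnion.1 hωU
  set τ := t (i.1+1) with hτdef
  have hτpos : 0 < τ := htpos _
  have hτsmall : τ ≤ 0.06 := le_trans (htle i) (le_trans hq1 he3)
  have hτmem : τ ∈ Set.Icc ε (1-ε) := ⟨htge i, by linarith⟩
  refine ⟨τ, hτmem, ?_⟩
  have hA' : lam * Real.sqrt (t (i.1+1) - t i.1) ≤ B τ ω - B (t i.1) ω := hωA
  have hC' : |B (t i.1) ω| ≤ Real.sqrt τ := by
    have h : |B (t i.1) ω - B 0 ω| ≤ Real.sqrt τ := hωC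
    rwa [hω0, sub_zero] at h
  have hD' : |B 1 ω| ≤ 2 := by
    have h : |B 1 ω - B 0 ω| ≤ 2 := hωD
    rwa [hω0, sub_zero] at h
  have hlamτ : lam * Real.sqrt (t (i.1+1) - t i.1) = (a+3) * Real.sqrt τ := by
    rw [htsub i, Real.sqrt_mul (ht0 _), hlam]
    field_simp
    ring
  rw [hlamτ] at hA'
  have hsτ : Real.sqrt τ ^ 2 = τ := Real.sq_sqrt hτpos.le
  have hsτ0 : 0 < Real.sqrt τ := Real.sqrt_pos.2 hτpos
  have hττ : τ ≤ Real.sqrt τ := by nlinarith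
  have hsqle : Real.sqrt (τ * (1-τ)) ≤ Real.sqrt τ := by
    apply Real.sqrt_le_sqrt
    nlinarith
  have habs1 : B (t i.1) ω ≥ -Real.sqrt τ := by
    have := (abs_le.1 hC').1
    linarith
  have habs2 : τ * B 1 ω ≤ 2 * τ := by
    have := (abs_le.1 hD').2
    nlinarith
  calc a * Real.sqrt (τ * (1-τ)) ≤ a * Real.sqrt τ :=
        mul_le_mul_of_nonneg_left hsqle ha
    _ ≤ (a+3) * Real.sqrt τ - Real.sqrt τ - 2*τ := by nlinarith
    _ ≤ B τ ω - τ * B 1 ω := by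
        have hBτ : B τ ω = (B τ ω - B (t i.1) ω) + B (t i.1) ω := by ring
        nlinarith


lemma lamsq_bound (η a L lam q : ℝ) (hη0 : 0 < η) (hη2 : η < 2) (hL0 : 0 ≤ L)
    (hadef : a = Real.sqrt ((2-η)*L)) (hq0 : 0 < q) (hqle : q ≤ η/8)
    (hlamdef : lam = (a+3)/Real.sqrt (1-q)) :
    (lam+1)^2/2 ≤ (1-η/8)*L + (529/(2*η) + 16) := by
  have hq4 : q ≤ 1/4 := by linarith
  have hg2 : Real.sqrt (1-q) ^ 2 = 1 - q := Real.sq_sqrt (by linarith)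
  have hsq1q : 0 < Real.sqrt (1-q) := Real.sqrt_pos.2 (by linarith)
  have hγle : 1/(1-q) ≤ 1 + η/4 := by
    rw [div_le_iff₀ (by linarith)]
    nlinarith
  have hγ2 : 1/(1-q) ≤ 3/2 := by nlinarith
  have hγ1 : 1 ≤ 1/(1-q) := by
    rw [le_div_iff₀ (by linarith)]
    nlinarith
  have ha0 : 0 ≤ a := by rw [hadef]; exact Real.sqrt_nonneg _
  have ha2 : a^2 = (2-η)*L := by
    rw [hadef]; exact Real.sq_sqrt (mul_nonneg (by linarith) hL0)
  have hlam0 : 0 ≤ lam := by rw [hlamdef]; positivity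
  have hlam_le : lam + 1 ≤ (a+4)/Real.sqrt (1-q) := by
    rw [hlamdef, div_add' _ _ _ hsq1q.ne', div_le_div_iff₀ hsq1q hsq1q]
    have hs1 : Real.sqrt (1-q) ≤ 1 := by
      nlinarith [Real.sqrt_nonneg (1-q)]
    nlinarith [Real.sqrt_nonneg (1-q)]
  have hlamsq1 : (lam+1)^2 ≤ (a+4)^2 * (1/(1-q)) := by
    have h1 : ((a+4)/Real.sqrt (1-q))^2 = (a+4)^2 * (1/(1-q)) := by
      rw [div_pow, hg2]; ring
    calc (lam+1)^2 ≤ ((a+4)/Real.sqrt (1-q))^2 := by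
          apply sq_le_sq' (by nlinarith) hlam_le
      _ = (a+4)^2 * (1/(1-q)) := h1
  have hsL : Real.sqrt L ^ 2 = L := Real.sq_sqrt hL0
  have hsL0 : 0 ≤ Real.sqrt L := Real.sqrt_nonneg _
  have ha23 : 16*a ≤ 23*Real.sqrt L := by
    have h1 : a ≤ Real.sqrt 2 * Real.sqrt L := by
      rw [hadef, ← Real.sqrt_mul (by norm_num)]
      apply Real.sqrt_le_sqrt
      nlinarith
    have h2 : Real.sqrt 2 ≤ 1.42 := by
      nlinarith [Real.sq_sqrt (by norm_num : (0:ℝ) ≤ 2), Real.sqrt_nonneg 2]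
    nlinarith [Real.sqrt_nonneg 2]
  have hamgm : 23*Real.sqrt L ≤ (η/4)*L + 529/η := by
    have hsq := sq_nonneg (η * Real.sqrt L - 46)
    have hexp : η*(23*Real.sqrt L) ≤ η*((η/4)*L + 529/η) := by
      have h2 : (η*Real.sqrt L)^2/4 = η*((η/4)*L) := by rw [mul_pow, hsL]; ring
      have h3 : η*(529/η) = 529 := mul_div_cancel₀ _ hη0.ne'
      nlinarith
    exact le_of_mul_le_mul_left hexp hη0
  have hfin : (a+4)^2 * (1/(1-q)) ≤ (2-η/2)*L + (η/4)*L + 529/η + 32 := by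
    have he2 : a^2 * (1/(1-q)) ≤ (1+η/4)*((2-η)*L) := by
      rw [ha2]
      have h0 : 0 ≤ (2-η)*L := mul_nonneg (by linarith) hL0
      nlinarith
    have he3 : (8*a+16) * (1/(1-q)) ≤ (3/2)*(8*a+16) := by
      nlinarith [mul_le_mul_of_nonneg_left hγ2 (by linarith : (0:ℝ) ≤ 8*a+16)]
    have he4 : (1+η/4)*((2-η)*L) ≤ (2-η/2)*L := by
      nlinarith [mul_nonneg (mul_nonneg hη0.le hη0.le) hL0]
    nlinarith
  have hdiv : (529/η) = 2*(529/(2*η)) := by field_simp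
  linarith [hlamsq1, hfin, hdiv]

lemma regime_decision (η : ℝ) (m : ℕ) (a L ℓ lam p kr : ℝ)
    (hη0 : 0 < η) (hη2 : η < 2) (hL0 : 0 ≤ L) (hm0 : (0:ℝ) < m)
    (hadef : a = Real.sqrt ((2-η)*L))
    (hq : Real.exp (-(m:ℝ)) ≤ η/8)
    (hlamdef : lam = (a+3)/Real.sqrt (1 - Real.exp (-(m:ℝ))))
    (hplow : Real.exp (-(lam+1)^2/2) / Real.sqrt (2*Real.pi) ≤ p)
    (hp0 : 0 ≤ p)
    (hL_L0 : (8/η) * ((529/(2*η)+16) + Real.log (2*(m:ℝ)*Real.sqrt (2*Real.pi))) ≤ L)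
    (hℓ : ℓ = Real.exp L)
    (hkr : ℓ/(2*(m:ℝ)) ≤ kr) :
    1 ≤ p * kr := by
  set Cc : ℝ := 529/(2*η) + 16 with hCcdef
  have hlamsq := lamsq_bound η a L lam (Real.exp (-(m:ℝ))) hη0 hη2 hL0 hadef
    (Real.exp_pos _) hq hlamdef
  have hs2π : (0:ℝ) < Real.sqrt (2*Real.pi) := Real.sqrt_pos.2 (by positivity)
  have hplow2 : Real.exp (-((1-η/8)*L + Cc)) / Real.sqrt (2*Real.pi) ≤ p := by
    refine le_trans ?_ hplow
    apply div_le_div_of_nonneg_right ?_ hs2π.le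
    apply Real.exp_le_exp.2
    have h : -(lam+1)^2/2 = -((lam+1)^2/2) := by ring
    rw [h]
    linarith
  have hL0η : (η/8) * ((8/η) * (Cc + Real.log (2*(m:ℝ)*Real.sqrt (2*Real.pi))))
      = Cc + Real.log (2*(m:ℝ)*Real.sqrt (2*Real.pi)) := by
    field_simp
  have hkey : 2*(m:ℝ)*Real.sqrt (2*Real.pi) ≤ Real.exp ((η/8)*L - Cc) := by
    calc 2*(m:ℝ)*Real.sqrt (2*Real.pi)
        = Real.exp (Real.log (2*(m:ℝ)*Real.sqrt (2*Real.pi))) :=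
          (Real.exp_log (mul_pos (by linarith : (0:ℝ) < 2*(m:ℝ)) hs2π)).symm
      _ ≤ Real.exp ((η/8)*L - Cc) := by
          apply Real.exp_le_exp.2
          have h1 : (η/8) * ((8/η) * (Cc + Real.log (2*(m:ℝ)*Real.sqrt (2*Real.pi))))
              ≤ (η/8) * L := by nlinarith
          rw [hL0η] at h1
          linarith
  have hstep1 : 1 ≤ (Real.exp (-((1-η/8)*L + Cc)) / Real.sqrt (2*Real.pi)) * (ℓ/(2*(m:ℝ))) := by
    rw [hℓ]
    have hexpand : (Real.exp (-((1-η/8)*L + Cc)) / Real.sqrt (2*Real.pi)) * (Real.exp L/(2*(m:ℝ)))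
        = Real.exp ((η/8)*L - Cc) / (Real.sqrt (2*Real.pi) * (2*(m:ℝ))) := by
      rw [div_mul_div_comm, ← Real.exp_add]
      ring_nf
    rw [hexpand, le_div_iff₀ (mul_pos hs2π (by linarith : (0:ℝ) < 2*(m:ℝ)))]
    nlinarith [hkey]
  calc (1:ℝ) ≤ (Real.exp (-((1-η/8)*L + Cc)) / Real.sqrt (2*Real.pi)) * (ℓ/(2*(m:ℝ))) := hstep1
    _ ≤ p * kr := by
        apply mul_le_mul hplow2 hkr ?_ hp0
        rw [hℓ]
        apply div_nonneg (Real.exp_pos _).le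
        linarith

lemma sqrt_mono_helper (η L Lmax : ℝ) (hη0 : 0 < η) (hL0 : 0 ≤ L)
    (hLmax0 : 0 ≤ Lmax) (hLle : L ≤ Lmax) :
    Real.sqrt ((2-η)*L) ≤ Real.sqrt (2*Lmax) := by
  apply Real.sqrt_le_sqrt
  nlinarith


theorem bridge_sup_ge_iterated_log {Ω : Type*} [MeasurableSpace Ω]
    (P : Measure Ω) [IsProbabilityMeasure P]
    (B : ℝ → Ω → ℝ) (hB : IsStandardBM P B)
    (η : ℝ) (hη0 : 0 < η) (hη2 : η < 2) :
    ∃ c : ℝ, 0 < c ∧ ∀ ε : ℝ, 0 < ε → ε ≤ Real.exp (-1) →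
      ENNReal.ofReal c ≤
        P {ω | Real.sqrt ((2 - η) * Real.log (Real.log (1 / ε)))
          ≤ ⨆ t : Set.Icc ε (1 - ε),
              (B t.1 ω - t.1 * B 1 ω) / Real.sqrt (t.1 * (1 - t.1))} := by
  classical
  set m : ℕ := ⌈Real.log (8/η)⌉₊ + 3 with hmdef
  have hm3 : 3 ≤ m := by omega
  have hm0 : (0:ℝ) < m := by exact_mod_cast (by omega : 0 < m)
  have hqη : Real.exp (-(m:ℝ)) ≤ η/8 := by
    have h1 : Real.log (8/η) ≤ (m:ℝ) := by
      calc Real.log (8/η) ≤ (⌈Real.log (8/η)⌉₊ : ℝ) := Nat.le_ceil _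
        _ ≤ (m:ℝ) := by exact_mod_cast (by omega : ⌈Real.log (8/η)⌉₊ ≤ m)
    have h2 : (8/η : ℝ) ≤ Real.exp (m:ℝ) := by
      calc (8/η : ℝ) = Real.exp (Real.log (8/η)) := (Real.exp_log (by positivity)).symm
        _ ≤ Real.exp (m:ℝ) := Real.exp_le_exp.2 h1
    rw [Real.exp_neg]
    rw [inv_le_comm₀ (Real.exp_pos _) (by positivity)]
    calc (η/8)⁻¹ = 8/η := by rw [inv_div]
      _ ≤ Real.exp (m:ℝ) := h2
  set Cc : ℝ := 529/(2*η) + 16 with hCcdef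
  set L0 : ℝ := (8/η) * (Cc + Real.log (2*m*Real.sqrt (2*Real.pi))) with hL0def
  set Lmax : ℝ := max (max L0 (Real.log (2*m))) 0 with hLmaxdef
  set M : ℝ := Real.sqrt (2*Lmax) with hMdef
  set c2 : ℝ := (Real.exp (-(M+3)^2/2) / Real.sqrt (2*Real.pi)) *
    (Real.exp (-1/2) / Real.sqrt (2*Real.pi)) with hc2def
  have hc2pos : 0 < c2 := by rw [hc2def]; positivity
  refine ⟨min (1/4) c2, lt_min (by norm_num) hc2pos, ?_⟩
  intro ε hε0 hε1
  set ℓ := Real.log (1/ε) with hℓdef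
  have hℓ1 : 1 ≤ ℓ := by
    have h1 : Real.exp 1 ≤ 1/ε := by
      rw [le_div_iff₀ hε0]
      calc Real.exp 1 * ε ≤ Real.exp 1 * Real.exp (-1) := by
            nlinarith [Real.exp_pos (1:ℝ)]
        _ = 1 := by rw [← Real.exp_add]; norm_num
    calc (1:ℝ) = Real.log (Real.exp 1) := (Real.log_exp 1).symm
      _ ≤ ℓ := Real.log_le_log (Real.exp_pos 1) h1
  have hℓ0 : 0 < ℓ := by linarith
  set L := Real.log ℓ with hLdef
  have hL0 : 0 ≤ L := Real.log_nonneg hℓ1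
  set a := Real.sqrt ((2-η)*L) with hadef
  have ha : 0 ≤ a := Real.sqrt_nonneg _
  have hεeq : ε = Real.exp (-ℓ) := by
    rw [hℓdef, one_div, Real.log_inv, neg_neg, Real.exp_log hε0]
  have hℓexp : ℓ = Real.exp L := (Real.exp_log hℓ0).symm
  -- a ≤ ℓ  and ε * a ≤ 1/2
  have haℓ : a ≤ ℓ := by
    have h1 : L ≤ ℓ - 1 := Real.log_le_sub_one_of_pos hℓ0
    have h2 : (2-η)*L ≤ ℓ^2 := by nlinarith
    calc a = Real.sqrt ((2-η)*L) := rfl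
      _ ≤ Real.sqrt (ℓ^2) := Real.sqrt_le_sqrt h2
      _ = ℓ := Real.sqrt_sq hℓ0.le
  have haε : ε * a ≤ 1/2 := by
    have h1 : ℓ ≤ Real.exp (ℓ - 1) := by
      have := Real.add_one_le_exp (ℓ - 1)
      linarith
    have h2 : ε * ℓ ≤ Real.exp (-1) := by
      rw [hεeq]
      calc Real.exp (-ℓ) * ℓ ≤ Real.exp (-ℓ) * Real.exp (ℓ-1) := by
            nlinarith [Real.exp_pos (-ℓ)]
        _ = Real.exp (-1) := by rw [← Real.exp_add]; ring_nf
    have h3 : ε * a ≤ ε * ℓ := by nlinarith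
    have h4 : Real.exp (-1:ℝ) ≤ 1/2 := (_root_.exp_neg_one_lt_half).le
    linarith
  set lam := (a+3)/Real.sqrt (1 - Real.exp (-(m:ℝ))) with hlamdef
  have hq4 : Real.exp (-(m:ℝ)) ≤ 1/4 := by linarith [hqη, hη2]
  have hqpos : 0 < Real.exp (-(m:ℝ)) := Real.exp_pos _
  have hsq1q : 0 < Real.sqrt (1 - Real.exp (-(m:ℝ))) := Real.sqrt_pos.2 (by linarith)
  have hlam0 : 0 ≤ lam := by rw [hlamdef]; positivity
  set p := (gaussianReal 0 1 (Set.Ici lam)).toReal with hpdef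
  have hplow : Real.exp (-(lam+1)^2/2) / Real.sqrt (2*Real.pi) ≤ p := by
    have h := gauss_tail_lb hlam0
    rw [hpdef]
    exact (ENNReal.ofReal_le_iff_le_toReal (measure_ne_top _ _)).1 h
  have hppos : 0 < p := lt_of_lt_of_le (by positivity) hplow
  have hple1 : p ≤ 1 := by
    rw [hpdef]
    calc (gaussianReal 0 1 (Set.Ici lam)).toReal ≤ (1 : ℝ≥0∞).toReal :=
        ENNReal.toReal_mono (by simp) prob_le_one
      _ = 1 := by simp
  set Kmax := ⌊ℓ/(m:ℝ)⌋₊ with hKmaxdef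
  by_cases hreg : ⌈1/p⌉₊ ≤ Kmax
  · -- regime 1 : multiscale
    set K := ⌈1/p⌉₊ with hKdef
    have hK1 : 1 ≤ K := Nat.one_le_iff_ne_zero.2 (by
      simp only [hKdef, ne_eq, Nat.ceil_eq_zero, not_le]
      positivity)
    have hceil : 1/p ≤ (K:ℝ) := Nat.le_ceil _
    have hp1 : 1 ≤ p * K := by
      calc (1:ℝ) = p * (1/p) := by field_simp
        _ ≤ p * K := by nlinarith
    have hp2 : p * K ≤ 2 := by
      have h1 : (K:ℝ) < 1/p + 1 := Nat.ceil_lt_add_one (by positivity)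
      calc p * K ≤ p * (1/p + 1) := by nlinarith
        _ = 1 + p := by field_simp
        _ ≤ 2 := by linarith
    have hKm : (K:ℝ) * m ≤ ℓ := by
      have h1 : (K:ℝ) ≤ (Kmax:ℝ) := by exact_mod_cast hreg
      have h2 : (Kmax:ℝ) ≤ ℓ/(m:ℝ) := Nat.floor_le (by positivity)
      calc (K:ℝ) * m ≤ (ℓ/(m:ℝ)) * m := by nlinarith
        _ = ℓ := by field_simp
    calc ENNReal.ofReal (min (1/4) c2) ≤ ENNReal.ofReal (1/4) :=
          ENNReal.ofReal_le_ofReal (min_le_left _ _)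
      _ ≤ _ := multiscale P B hB ε a lam m K hε0 hε1 ha hm3 hK1 hKm hlamdef hp1 hp2
  · -- regime 2 : single point
    have haM : a ≤ M := by
      have hLle : L ≤ Lmax := by
        by_contra hgt
        push_neg at hgt
        apply hreg
        have hL_L0 : L0 < L := lt_of_le_of_lt (le_trans (le_max_left _ _) (le_max_left _ _)) hgt
        have hL_log2m : Real.log (2*m) < L :=
          lt_of_le_of_lt (le_trans (le_max_right _ _) (le_max_left _ _)) hgt
        have h2m0 : (0:ℝ) < 2*m := by positivity
        have hℓ2m : 2*(m:ℝ) ≤ ℓ := by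
          rw [hℓexp]
          calc 2*(m:ℝ) = Real.exp (Real.log (2*m)) := (Real.exp_log h2m0).symm
            _ ≤ Real.exp L := Real.exp_le_exp.2 hL_log2m.le
        have hKmax_ge : ℓ/(2*m) ≤ (Kmax:ℝ) := by
          have h1 : ℓ/(m:ℝ) - 1 < (Kmax:ℝ) := Nat.sub_one_lt_floor _
          have h2 : ℓ/(2*m) ≤ ℓ/(m:ℝ) - 1 := by
            rw [div_sub' hm0.ne']
            rw [div_le_div_iff₀ (by positivity) hm0]
            nlinarith
          linarith
        have hpK : 1 ≤ p * (Kmax:ℝ) :=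
          regime_decision η m a L ℓ lam p (Kmax:ℝ) hη0 hη2 hL0 hm0 hadef hqη hlamdef
            hplow hppos.le (by rw [hL0def, hCcdef] at hL_L0; exact hL_L0.le) hℓexp hKmax_ge
        rw [Nat.ceil_le, div_le_iff₀ hppos]
        calc (1:ℝ) ≤ p * (Kmax:ℝ) := hpK
          _ = (Kmax:ℝ) * p := mul_comm _ _
      have hLmax0 : (0:ℝ) ≤ Lmax := le_max_right _ _
      rw [hMdef, hadef]
      exact sqrt_mono_helper η L Lmax hη0 hL0 hLmax0 hLle
    calc ENNReal.ofReal (min (1/4) c2) ≤ ENNReal.ofReal c2 :=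
          ENNReal.ofReal_le_ofReal (min_le_right _ _)
      _ ≤ _ := by
          rw [hc2def]
          exact onepoint P B hB ε a M hε0 hε1 ha haM haε
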